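/- For any simple graph G, the trussness satisfies t_G ≤ 3 · max over nonempty edge-induced subgraphs S of G of (T_S / m_S), where T_S and m_S are the number of triangles and edges of S. -/

import Mathlib

/-- The support of the edge `{u,v}` in graph `H`. -/
noncomputable def supp {V : Type*} (H : SimpleGraph V) (u v : V) : ℕ :=
  {w | H.Adj u w ∧ H.Adj v w}.ncard

/-- The number of triangles of `G`. -/
noncomputable def triCount {V : Type*} (G : SimpleGraph V) : ℕ :=
  {t : Finset V | G.IsNClique 3 t}.ncard

/-- The trussness of `G`. -/
noncomputable def trussness {V : Type*} (G : SimpleGraph V) : ℕ :=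
  sSup {k | ∃ H : SimpleGraph V, H ≤ G ∧ H ≠ ⊥ ∧ ∀ u v, H.Adj u v → k ≤ supp H u v}

open Finset in
/-- Key counting lemma: if every edge of `H` has support at least `k`, then
`k * m_H ≤ 3 * T_H`. -/
lemma key_count {V : Type*} [Fintype V] (H : SimpleGraph V) (k : ℕ)
    (hk : ∀ u v, H.Adj u v → k ≤ supp H u v) :
    k * H.edgeSet.ncard ≤ 3 * triCount H := by
  classical
  set E : Finset (Sym2 V) := H.edgeFinset with hE
  set Tset : Finset (Finset V) := univ.filter (fun t => H.IsNClique 3 t) with hT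
  have hm : H.edgeSet.ncard = E.card := by
    rw [Set.ncard_eq_toFinset_card']
    rw [hE]; congr 1
  have hTc : triCount H = Tset.card := by
    rw [triCount, hT]
    rw [show {t : Finset V | H.IsNClique 3 t} =
      ↑(univ.filter (fun t => H.IsNClique 3 t)) by ext t; simp]
    rw [Set.ncard_coe_finset]
  -- the sigma set of (edge, common neighbor) pairs
  set S : Finset ((_ : Sym2 V) × V) :=
    E.sigma (fun e => univ.filter (fun w => ∀ x ∈ e, H.Adj x w)) with hS
  -- the sigma set of (triangle, edge inside it) pairs
  set Q : Finset ((_ : Finset V) × Sym2 V) :=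
    Tset.sigma (fun t => E.filter (fun e => ∀ x ∈ e, x ∈ t)) with hQ
  have step1 : k * E.card ≤ S.card := by
    rw [hS, Finset.card_sigma]
    calc k * E.card = ∑ _e ∈ E, k := by rw [Finset.sum_const, smul_eq_mul, mul_comm]
    _ ≤ _ := by
      apply Finset.sum_le_sum
      intro e he
      induction e using Sym2.ind with
      | _ u v =>
        have hadj : H.Adj u v := by
          rw [hE, SimpleGraph.mem_edgeFinset, SimpleGraph.mem_edgeSet] at he
          exact he
        have : supp H u v = (univ.filter (fun w => ∀ x ∈ s(u, v), H.Adj x w)).card := by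
          rw [supp, show {w | H.Adj u w ∧ H.Adj v w} =
            ↑(univ.filter (fun w => ∀ x ∈ s(u, v), H.Adj x w)) by
              ext w; simp [Sym2.mem_iff]]
          rw [Set.ncard_coe_finset]
        rw [← this]
        exact hk u v hadj
  have step2 : S.card ≤ Q.card := by
    apply Finset.card_le_card_of_injOn
      (fun p => ⟨insert p.2 (univ.filter (· ∈ p.1)), p.1⟩)
    · rintro ⟨e, w⟩ hp
      rw [hS, Finset.mem_coe, Finset.mem_sigma, Finset.mem_filter] at hp
      obtain ⟨heE, -, hcom⟩ := hp
      induction e using Sym2.ind with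
      | _ u v =>
        have hadj : H.Adj u v := by
          rw [hE, SimpleGraph.mem_edgeFinset, SimpleGraph.mem_edgeSet] at heE
          exact heE
        have huw : H.Adj u w := hcom u (by simp)
        have hvw : H.Adj v w := hcom v (by simp)
        have hfs : (univ.filter (· ∈ s(u, v))) = {u, v} := by
          ext x; simp [Sym2.mem_iff]
        rw [hQ, Finset.mem_coe, Finset.mem_sigma]
        constructor
        · rw [hT, Finset.mem_filter]
          refine ⟨Finset.mem_univ _, ?_⟩
          simp only [hfs]
          rw [show insert w ({u, v} : Finset V) = {w, u, v} by rfl]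
          rw [SimpleGraph.is3Clique_triple_iff]
          exact ⟨huw.symm, hvw.symm, hadj⟩
        · rw [Finset.mem_filter]
          refine ⟨heE, ?_⟩
          intro x hx
          simp only [hfs]
          simp [Sym2.mem_iff] at hx
          rcases hx with rfl | rfl <;> simp
    · rintro ⟨e, w⟩ hp ⟨e', w'⟩ hp' heq
      simp only [Sigma.mk.inj_iff] at heq
      obtain ⟨h1, h2⟩ := heq
      have he : e = e' := eq_of_heq h2
      subst he
      simp only [hS, Finset.mem_coe, Finset.mem_sigma, Finset.mem_filter] at hp hp'
      have hwne : w ∉ univ.filter (· ∈ e) := by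
        simp only [Finset.mem_filter, Finset.mem_univ, true_and]
        intro hw
        exact (H.irrefl (hp.2.2 w hw))
      have hwne' : w' ∉ univ.filter (· ∈ e) := by
        simp only [Finset.mem_filter, Finset.mem_univ, true_and]
        intro hw
        exact (H.irrefl (hp'.2.2 w' hw))
      have : w = w' := by
        have : w ∈ insert w' (univ.filter (· ∈ e)) := h1 ▸ Finset.mem_insert_self w _
        rcases Finset.mem_insert.1 this with h | h
        · exact h
        · exact absurd h hwne
      rw [this]
  have step3 : Q.card ≤ 3 * Tset.card := by
    rw [hQ, Finset.card_sigma]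
    calc ∑ t ∈ Tset, (E.filter (fun e => ∀ x ∈ e, x ∈ t)).card
        ≤ ∑ _t ∈ Tset, 3 := by
          apply Finset.sum_le_sum
          intro t ht
          have htcard : t.card = 3 := by
            rw [hT, Finset.mem_filter] at ht
            exact ht.2.card_eq
          have hsub : (E.filter (fun e => ∀ x ∈ e, x ∈ t)) ⊆
              t.offDiag.image Sym2.mk.uncurry := by
            intro e he
            rw [Finset.mem_filter] at he
            obtain ⟨heE, hmem⟩ := he
            induction e using Sym2.ind with
            | _ u v =>
              have hadj : H.Adj u v := by
                rw [hE, SimpleGraph.mem_edgeFinset, SimpleGraph.mem_edgeSet] at heE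
                exact heE
              refine Finset.mem_image.2 ⟨(u, v), ?_, rfl⟩
              rw [Finset.mem_offDiag]
              exact ⟨hmem u (by simp), hmem v (by simp), hadj.ne⟩
          calc (E.filter (fun e => ∀ x ∈ e, x ∈ t)).card
              ≤ (t.offDiag.image Sym2.mk.uncurry).card := Finset.card_le_card hsub
            _ = 3 := by
              have h2 := Sym2.two_mul_card_image_offDiag t
              rw [Finset.offDiag_card, htcard] at h2
              omega
      _ = 3 * Tset.card := by rw [Finset.sum_const, smul_eq_mul, mul_comm]
  rw [hm, hTc]
  exact le_trans step1 (le_trans step2 step3)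

/-- The trussness is at most three times the maximum triangle density
`T_S / m_S` over nonempty edge-induced subgraphs `S` of `G`. -/
theorem trussness_le_three_mul_max_density {V : Type*} [Fintype V]
    (G : SimpleGraph V) (h : G.edgeSet.Nonempty) :
    (trussness G : ℝ) ≤ 3 * sSup {x : ℝ | ∃ S : SimpleGraph V, S ≤ G ∧
      S.edgeSet.Nonempty ∧ x = (triCount S : ℝ) / (S.edgeSet.ncard : ℝ)} := by
  classical
  set K := {k | ∃ H : SimpleGraph V, H ≤ G ∧ H ≠ ⊥ ∧ ∀ u v, H.Adj u v → k ≤ supp H u v}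
    with hK
  set D := {x : ℝ | ∃ S : SimpleGraph V, S ≤ G ∧
      S.edgeSet.Nonempty ∧ x = (triCount S : ℝ) / (S.edgeSet.ncard : ℝ)} with hD
  have hGne : G ≠ ⊥ := by
    intro hb
    rw [hb] at h
    simp [SimpleGraph.edgeSet_bot] at h
  have hKne : K.Nonempty := ⟨0, G, le_refl _, hGne, fun u v _ => Nat.zero_le _⟩
  have hKbdd : BddAbove K := by
    refine ⟨Fintype.card V, ?_⟩
    rintro k ⟨H, hle, hne, hs⟩
    have : H.edgeSet.Nonempty := by
      rw [Set.nonempty_iff_ne_empty]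
      intro he
      exact hne (SimpleGraph.edgeSet_eq_empty.1 he)
    obtain ⟨e, he⟩ := this
    induction e using Sym2.ind with
    | _ u v =>
      have hadj : H.Adj u v := he
      calc k ≤ supp H u v := hs u v hadj
        _ ≤ (Set.univ : Set V).ncard :=
          Set.ncard_le_ncard (Set.subset_univ _) (Set.toFinite _)
        _ = Fintype.card V := by rw [Set.ncard_univ, Nat.card_eq_fintype_card]
  have htr : trussness G ∈ K := Nat.sSup_mem hKne hKbdd
  obtain ⟨H, hle, hne, hs⟩ := htr
  set t := trussness G
  have hEne : H.edgeSet.Nonempty := by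
    rw [Set.nonempty_iff_ne_empty]
    intro he
    exact hne (SimpleGraph.edgeSet_eq_empty.1 he)
  have hmpos : 0 < H.edgeSet.ncard := by
    rw [Set.ncard_pos (Set.toFinite _)]
    exact hEne
  have hkey := key_count H t hs
  have hmem : (triCount H : ℝ) / (H.edgeSet.ncard : ℝ) ∈ D :=
    ⟨H, hle, hEne, rfl⟩
  have hDbdd : BddAbove D := by
    refine ⟨(Fintype.card (Finset V) : ℝ), ?_⟩
    rintro x ⟨S, -, hSne, rfl⟩
    have hm1 : (1 : ℝ) ≤ (S.edgeSet.ncard : ℝ) := by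
      have : 0 < S.edgeSet.ncard := by
        rw [Set.ncard_pos (Set.toFinite _)]
        exact hSne
      exact_mod_cast this
    have hTle : (triCount S : ℝ) ≤ (Fintype.card (Finset V) : ℝ) := by
      have : triCount S ≤ Fintype.card (Finset V) := by
        rw [triCount]
        calc _ ≤ (Set.univ : Set (Finset V)).ncard :=
          Set.ncard_le_ncard (Set.subset_univ _) (Set.toFinite _)
          _ = _ := by rw [Set.ncard_univ, Nat.card_eq_fintype_card]
      exact_mod_cast this
    calc (triCount S : ℝ) / (S.edgeSet.ncard : ℝ)
        ≤ (triCount S : ℝ) / 1 := by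
          apply div_le_div_of_nonneg_left ?_ ?_ hm1 <;> positivity
      _ = (triCount S : ℝ) := div_one _
      _ ≤ _ := hTle
  have hstep : (t : ℝ) ≤ 3 * ((triCount H : ℝ) / (H.edgeSet.ncard : ℝ)) := by
    rw [mul_div_assoc']
    rw [le_div_iff₀ (by exact_mod_cast hmpos)]
    have : (t : ℝ) * (H.edgeSet.ncard : ℝ) ≤ 3 * (triCount H : ℝ) := by
      exact_mod_cast hkey
    linarith
  calc (t : ℝ) ≤ 3 * ((triCount H : ℝ) / (H.edgeSet.ncard : ℝ)) := hstep
    _ ≤ 3 * sSup D := by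
      apply mul_le_mul_of_nonneg_left (le_csSup hDbdd hmem) (by norm_num)
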